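/- Let d > m > 1 and g(z) = z^d + t·z^(m-1) + Σ_{i=2}^m (α_i t + β_i) z^(m-i) over the algebraic closure K of ℂ(t), with α_2 ≠ 0. There is no polynomial h ∈ K[z] of degree ≥ 2 and integer e > 1 with h^e = g, where h^e is the e-fold composition of h. -/

import Mathlib

open Polynomial

/-- The element `t` in the algebraic closure of `ℂ(t)`. -/
noncomputable def tK : AlgebraicClosure (RatFunc ℂ) :=
  algebraMap (RatFunc ℂ) (AlgebraicClosure (RatFunc ℂ)) RatFunc.X

/-- The embedding of `ℂ` into the algebraic closure of `ℂ(t)`. -/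
noncomputable def cK : ℂ →+* AlgebraicClosure (RatFunc ℂ) :=
  (algebraMap (RatFunc ℂ) (AlgebraicClosure (RatFunc ℂ))).comp (algebraMap ℂ (RatFunc ℂ))

/-- `polyIter p n` is the `n`-fold composition `p ∘ p ∘ ⋯ ∘ p`. -/
noncomputable def polyIter {R : Type*} [CommSemiring R] (p : Polynomial R) : ℕ → Polynomial R
  | 0 => X
  | n + 1 => p.comp (polyIter p n)


section A1
open Polynomial Finset
namespace Aux

variable {R S : Type*}

lemma polyIter_succ' [CommSemiring R] (p : R[X]) (n : ℕ) :
    polyIter p (n + 1) = (polyIter p n).comp p := by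
  induction n with
  | zero => simp [polyIter]
  | succ n ih =>
    show p.comp (polyIter p (n+1)) = (p.comp (polyIter p n)).comp p
    rw [Polynomial.comp_assoc, ← ih]

lemma map_polyIter [CommSemiring R] [CommSemiring S] (f : R →+* S) (p : R[X]) (n : ℕ) :
    (polyIter p n).map f = polyIter (p.map f) n := by
  induction n with
  | zero => simp [polyIter]
  | succ n ih => show (p.comp (polyIter p n)).map f = _; rw [Polynomial.map_comp, ih]; rfl

variable {K : Type*} [Field K]

lemma natDegree_polyIter (p : K[X]) (n : ℕ) :
    (polyIter p n).natDegree = p.natDegree ^ n := by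
  induction n with
  | zero => simp [polyIter]
  | succ n ih => show (p.comp (polyIter p n)).natDegree = _; rw [natDegree_comp, ih, pow_succ]; ring

lemma monic_polyIter {p : K[X]} (hp : p.Monic) (h1 : 1 ≤ p.natDegree)
    (n : ℕ) : (polyIter p n).Monic := by
  induction n with
  | zero => exact monic_X
  | succ n ih =>
    show (p.comp (polyIter p n)).Monic
    refine hp.comp ih ?_
    rw [natDegree_polyIter]
    positivity

lemma coeff_comp_C_mul_X (p : K[X]) (c : K) (n : ℕ) :
    (p.comp (C c * X)).coeff n = p.coeff n * c ^ n := by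
  rw [comp_eq_sum_left, Polynomial.sum, finset_sum_coeff]
  have h : ∀ e ∈ p.support, (C (p.coeff e) * (C c * X) ^ e).coeff n
      = if n = e then p.coeff e * c ^ e else 0 := by
    intro e _
    rw [mul_pow, ← C_pow, ← mul_assoc, ← C_mul, coeff_C_mul, coeff_X_pow]
    by_cases h : n = e <;> simp [h]
  rw [Finset.sum_congr rfl h, Finset.sum_ite_eq p.support n (fun e => p.coeff e * c ^ e)]
  by_cases hn : n ∈ p.support
  · simp [hn]
  · simp [hn, Polynomial.notMem_support_iff.mp hn]

lemma comp_expand (p q : K[X]) :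
    p.comp q = ∑ j ∈ Finset.range (p.natDegree + 1), C (p.coeff j) * q ^ j := by
  rw [Polynomial.comp, eval₂_eq_sum_range]

lemma nextCoeff_comp {p q : K[X]} (hp : p.Monic) (hq : q.Monic)
    (ha : 1 ≤ p.natDegree) (hb : 2 ≤ q.natDegree) :
    (p.comp q).nextCoeff = (p.natDegree : K) * q.nextCoeff := by
  set a := p.natDegree with hadef
  set b := q.natDegree with hbdef
  have hab : (p.comp q).natDegree = a * b := natDegree_comp
  have hpos : 0 < a * b := by positivity
  rw [nextCoeff_of_natDegree_pos (by omega), hab, comp_expand]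
  rw [finset_sum_coeff]
  have key : ∀ j ∈ Finset.range (a + 1),
      (C (p.coeff j) * q ^ j).coeff (a * b - 1)
        = if a = j then (a : K) * q.nextCoeff else 0 := by
    intro j hj
    rcases eq_or_ne a j with h | hne
    · rw [if_pos h, ← h]
      rw [show p.coeff a = 1 from hp.coeff_natDegree, C_1, one_mul]
      have hdeg : (q ^ a).natDegree = a * b := by
        rw [hq.natDegree_pow]
      have h2 : (q ^ a).nextCoeff = a • q.nextCoeff := hq.nextCoeff_pow a
      rw [nextCoeff_of_natDegree_pos (by omega), hdeg] at h2
      rw [h2, nsmul_eq_mul]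
    · rw [if_neg hne]
      apply coeff_eq_zero_of_natDegree_lt
      have h1 : (C (p.coeff j) * q ^ j).natDegree ≤ j * b := by
        refine le_trans natDegree_mul_le ?_
        simp [hq.natDegree_pow, hbdef]
      have hj' : j < a := by
        have := Finset.mem_range.mp hj
        omega
      have h3 : (a-1) * b + b = a * b := by
        have h4 : a - 1 + 1 = a := by omega
        calc (a-1)*b + b = (a-1+1) * b := by ring
          _ = a * b := by rw [h4]
      calc (C (p.coeff j) * q ^ j).natDegree ≤ j * b := h1
        _ ≤ (a - 1) * b := Nat.mul_le_mul_right _ (by omega)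
        _ < a * b - 1 := by omega
  rw [Finset.sum_congr rfl key, Finset.sum_ite_eq (Finset.range (a+1)) a
    (fun _ => (a:K) * q.nextCoeff)]
  simp

lemma nextCoeff_polyIter {p : K[X]} (hp : p.Monic) (hk : 2 ≤ p.natDegree) (n : ℕ) :
    (polyIter p (n + 1)).nextCoeff = ((p.natDegree : K)) ^ n * p.nextCoeff := by
  induction n with
  | zero =>
    show (p.comp (polyIter p 0)).nextCoeff = _
    show (p.comp X).nextCoeff = _
    simp [Polynomial.comp_X]
  | succ n ih =>
    show (p.comp (polyIter p (n+1))).nextCoeff = _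
    rw [nextCoeff_comp hp (monic_polyIter hp (by omega) (n+1)) (by omega)
      (by rw [natDegree_polyIter]
          calc 2 ≤ p.natDegree ^ 1 := by simpa using hk
            _ ≤ p.natDegree ^ (n+1) := Nat.pow_le_pow_right (by omega) (by omega)),
      ih, pow_succ]
    ring

end Aux

end A1

section C3
open Polynomial Finset
namespace Aux

variable {K : Type*} [Field K]

lemma comp_sub_comp_eq (p P Q : K[X]) :
    p.comp P - p.comp Q = (P - Q) *
      ∑ j ∈ Finset.range (p.natDegree + 1),
        C (p.coeff j) * (∑ i ∈ Finset.range j, P ^ i * Q ^ (j - 1 - i)) := by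
  rw [comp_expand p P, comp_expand p Q, ← Finset.sum_sub_distrib, Finset.mul_sum]
  refine Finset.sum_congr rfl fun j _ => ?_
  rw [← mul_sub]
  have h := geom_sum₂_mul P Q j
  calc C (p.coeff j) * (P ^ j - Q ^ j)
      = C (p.coeff j) * ((∑ i ∈ Finset.range j, P ^ i * Q ^ (j - 1 - i)) * (P - Q)) := by rw [h]
    _ = (P - Q) * (C (p.coeff j) * ∑ i ∈ Finset.range j, P ^ i * Q ^ (j - 1 - i)) := by ring

lemma T_spec [CharZero K] {p P Q : K[X]} {D : ℕ} (hp : p.Monic) (hk : 1 ≤ p.natDegree)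
    (hP : P.Monic) (hQ : Q.Monic) (hPD : P.natDegree = D) (hQD : Q.natDegree = D)
    (hD : 1 ≤ D) :
    (∑ j ∈ Finset.range (p.natDegree + 1),
        C (p.coeff j) * (∑ i ∈ Finset.range j, P ^ i * Q ^ (j - 1 - i))) ≠ 0 ∧
    (∑ j ∈ Finset.range (p.natDegree + 1),
        C (p.coeff j) * (∑ i ∈ Finset.range j, P ^ i * Q ^ (j - 1 - i))).natDegree
      = (p.natDegree - 1) * D := by
  set k := p.natDegree with hkdef
  set T := ∑ j ∈ Finset.range (k + 1),
      C (p.coeff j) * (∑ i ∈ Finset.range j, P ^ i * Q ^ (j - 1 - i)) with hT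
  have hmondeg : ∀ i j : ℕ, (P ^ i * Q ^ j).natDegree = (i + j) * D := by
    intro i j
    rw [(hP.pow i).natDegree_mul (hQ.pow j), hP.natDegree_pow, hQ.natDegree_pow, hPD, hQD]
    ring
  have hSdeg : ∀ j : ℕ, (∑ i ∈ Finset.range j, P ^ i * Q ^ (j - 1 - i)).natDegree
      ≤ (j - 1) * D := by
    intro j
    refine natDegree_sum_le_of_forall_le _ _ fun i hi => ?_
    rw [hmondeg]
    have : i + (j - 1 - i) = j - 1 := by
      have := Finset.mem_range.mp hi; omega
    rw [this]
  have hcoeff : T.coeff ((k - 1) * D) = (k : K) := by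
    have key : ∀ j ∈ Finset.range (k + 1),
        (C (p.coeff j) * (∑ i ∈ Finset.range j, P ^ i * Q ^ (j - 1 - i))).coeff ((k-1)*D)
          = if k = j then (k : K) else 0 := by
      intro j hj
      rcases eq_or_ne k j with h | hne
      · rw [if_pos h, ← h]
        rw [show p.coeff k = 1 from hp.coeff_natDegree, C_1, one_mul, finset_sum_coeff]
        have : ∀ i ∈ Finset.range k, (P ^ i * Q ^ (k - 1 - i)).coeff ((k-1)*D) = 1 := by
          intro i hi
          have hd : (P ^ i * Q ^ (k - 1 - i)).natDegree = (k-1)*D := by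
            rw [hmondeg]
            have := Finset.mem_range.mp hi
            have h2 : i + (k - 1 - i) = k - 1 := by omega
            rw [h2]
          rw [← hd]
          exact ((hP.pow i).mul (hQ.pow (k-1-i))).coeff_natDegree
        rw [Finset.sum_congr rfl this]
        simp
      · rw [if_neg hne]
        have hjk : j < k := by have := Finset.mem_range.mp hj; omega
        rcases Nat.eq_zero_or_pos j with rfl | hj1
        · simp
        · apply coeff_eq_zero_of_natDegree_lt
          have hb : (C (p.coeff j) * ∑ i ∈ Finset.range j, P ^ i * Q ^ (j - 1 - i)).natDegree
              ≤ (j - 1) * D := by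
            refine le_trans natDegree_mul_le ?_
            simpa using hSdeg j
          refine lt_of_le_of_lt hb ?_
          have : j - 1 < k - 1 := by omega
          exact (Nat.mul_lt_mul_right hD).mpr this
    rw [hT, finset_sum_coeff, Finset.sum_congr rfl key,
      Finset.sum_ite_eq (Finset.range (k+1)) k (fun _ => (k : K))]
    simp
  have hTdeg_le : T.natDegree ≤ (k - 1) * D := by
    refine natDegree_sum_le_of_forall_le _ _ fun j hj => ?_
    refine le_trans natDegree_mul_le ?_
    have := Finset.mem_range.mp hj
    refine le_trans (by simpa using hSdeg j) (Nat.mul_le_mul_right _ (by omega))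
  have hk0 : (k : K) ≠ 0 := Nat.cast_ne_zero.mpr (by omega)
  have hT0 : T ≠ 0 := fun h => by rw [h, coeff_zero] at hcoeff; exact hk0 hcoeff.symm
  refine ⟨hT0, le_antisymm hTdeg_le (le_natDegree_of_ne_zero ?_)⟩
  rw [hcoeff]; exact hk0

end Aux
end C3

section C3B
open Polynomial Finset
namespace Aux

variable {K : Type*} [Field K] [CharZero K]

lemma polyIter_diff {P Q : K[X]} {k : ℕ} (hk : 2 ≤ k)
    (hP : P.Monic) (hQ : Q.Monic) (hPd : P.natDegree = k) (hQd : Q.natDegree = k)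
    (hsub : (P - Q).natDegree ≤ k - 2) (hne : P ≠ Q) :
    ∀ n : ℕ, 1 ≤ n → (polyIter P n - polyIter Q n) ≠ 0 ∧
      (polyIter P n - polyIter Q n).natDegree + k = k ^ n + (P - Q).natDegree := by
  have hu : P - Q ≠ 0 := sub_ne_zero.mpr hne
  set r := (P - Q).natDegree with hrdef
  intro n hn
  induction n with
  | zero => omega
  | succ n ih =>
    rcases Nat.eq_zero_or_pos n with rfl | hn1
    · constructor
      · show P.comp (polyIter P 0) - Q.comp (polyIter Q 0) ≠ 0
        show P.comp X - Q.comp X ≠ 0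
        simpa [Polynomial.comp_X] using hu
      · show (P.comp (polyIter P 0) - Q.comp (polyIter Q 0)).natDegree + k = _
        show (P.comp X - Q.comp X).natDegree + k = _
        simp [Polynomial.comp_X]
        omega
    · obtain ⟨hA, hAdeg⟩ := ih hn1
      set Pn := polyIter P n with hPn
      set Qn := polyIter Q n with hQn
      have hPnM : Pn.Monic := monic_polyIter hP (by omega) n
      have hQnM : Qn.Monic := monic_polyIter hQ (by omega) n
      have hPnd : Pn.natDegree = k ^ n := by rw [hPn, natDegree_polyIter, hPd]
      have hQnd : Qn.natDegree = k ^ n := by rw [hQn, natDegree_polyIter, hQd]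
      have hq1 : 1 ≤ k ^ n := Nat.one_le_pow _ _ (by omega)
      have hqk : k ≤ k ^ n := by
        calc k = k ^ 1 := (pow_one k).symm
          _ ≤ k ^ n := Nat.pow_le_pow_right (by omega) hn1
      -- decomposition
      have hdecomp : polyIter P (n+1) - polyIter Q (n+1)
          = (P.comp Pn - P.comp Qn) + (P - Q).comp Qn := by
        show P.comp Pn - Q.comp Qn = _
        rw [Polynomial.sub_comp]
        ring
      set T := ∑ j ∈ Finset.range (P.natDegree + 1),
        C (P.coeff j) * (∑ i ∈ Finset.range j, Pn ^ i * Qn ^ (j - 1 - i)) with hTdef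
      have hBeq : P.comp Pn - P.comp Qn = (Pn - Qn) * T := comp_sub_comp_eq P Pn Qn
      obtain ⟨hT0, hTdeg⟩ := T_spec hP (by omega) hPnM hQnM hPnd hQnd hq1
      have hAn : Pn - Qn ≠ 0 := hA
      have hB0 : (Pn - Qn) * T ≠ 0 := mul_ne_zero hAn hT0
      have hBdeg : ((Pn - Qn) * T).natDegree = (Pn - Qn).natDegree + (k - 1) * k ^ n := by
        rw [natDegree_mul hAn hT0, hTdeg, hPd]
      have hC0 : (P - Q).comp Qn ≠ 0 := by
        intro h
        have := leadingCoeff_comp (p := P - Q) (q := Qn) (by rw [hQnd]; omega)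
        rw [h] at this
        simp only [leadingCoeff_zero] at this
        have : (P - Q).leadingCoeff * Qn.leadingCoeff ^ (P - Q).natDegree = 0 := this.symm
        rw [hQnM.leadingCoeff, one_pow, mul_one] at this
        exact hu (leadingCoeff_eq_zero.mp this)
      have hCdeg : ((P - Q).comp Qn).natDegree = r * k ^ n := by
        rw [natDegree_comp, hQnd]
      -- degree comparison
      have hlt : ((P - Q).comp Qn).natDegree < ((Pn - Qn) * T).natDegree := by
        rw [hCdeg, hBdeg]
        have e1 : r * k ^ n ≤ (k - 2) * k ^ n := Nat.mul_le_mul_right _ hsub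
        have e2 : (k - 2) * k ^ n + 2 * k ^ n = k * k ^ n := by
          have : k - 2 + 2 = k := by omega
          calc (k-2) * k^n + 2 * k^n = (k - 2 + 2) * k^n := by ring
            _ = k * k ^ n := by rw [this]
        have e3 : (k - 1) * k ^ n + k ^ n = k * k ^ n := by
          have : k - 1 + 1 = k := by omega
          calc (k-1) * k^n + k^n = (k - 1 + 1) * k^n := by ring
            _ = k * k ^ n := by rw [this]
        omega
      have hdlt : ((P - Q).comp Qn).degree < ((Pn - Qn) * T).degree := by
        rw [degree_eq_natDegree hC0, degree_eq_natDegree hB0]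
        exact_mod_cast hlt
      have hsum0 : (Pn - Qn) * T + (P - Q).comp Qn ≠ 0 := by
        intro h
        have := degree_add_eq_left_of_degree_lt hdlt
        rw [h] at this
        rw [degree_zero] at this
        exact hB0 (degree_eq_bot.mp this.symm)
      have hsumdeg : ((Pn - Qn) * T + (P - Q).comp Qn).natDegree
          = (Pn - Qn).natDegree + (k - 1) * k ^ n := by
        rw [natDegree_eq_of_degree_eq (degree_add_eq_left_of_degree_lt hdlt), hBdeg]
      constructor
      · rw [hdecomp, hBeq]; exact hsum0
      · rw [hdecomp, hBeq, hsumdeg]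
        have e3 : (k - 1) * k ^ n + k ^ n = k * k ^ n := by
          have h4 : k - 1 + 1 = k := by omega
          calc (k-1) * k^n + k^n = (k - 1 + 1) * k^n := by ring
            _ = k * k ^ n := by rw [h4]
        have e4 : k * k ^ n = k ^ (n + 1) := (pow_succ k n).symm ▸ (mul_comm k (k^n)) ▸ rfl
        have e5 : k ^ (n+1) = k * k ^ n := by rw [pow_succ]; ring
        omega

lemma polyIter_inj {P Q : K[X]} {k : ℕ} (hk : 2 ≤ k)
    (hP : P.Monic) (hQ : Q.Monic) (hPd : P.natDegree = k) (hQd : Q.natDegree = k)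
    (hsub : (P - Q).natDegree ≤ k - 2) {e : ℕ} (he : 1 ≤ e)
    (heq : polyIter P e = polyIter Q e) : P = Q := by
  by_contra hne
  have := (polyIter_diff hk hP hQ hPd hQd hsub hne e he).1
  rw [heq, sub_self] at this
  exact this rfl

end Aux
end C3B

section C4
open Polynomial Finset
namespace Aux

variable {κ : Type*} [Field κ]

noncomputable def swapRH (κ : Type*) [Field κ] :
    Polynomial (Polynomial κ) →+* Polynomial (Polynomial κ) :=
  eval₂RingHom (mapRingHom (Polynomial.C : κ →+* Polynomial κ)) (Polynomial.C Polynomial.X)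

lemma swapRH_coeff (P : Polynomial (Polynomial κ)) (i j : ℕ) :
    ((swapRH κ P).coeff i).coeff j = (P.coeff j).coeff i := by
  induction P using Polynomial.induction_on' with
  | add p q hp hq => simp [map_add, coeff_add, hp, hq]
  | monomial n a =>
    rw [swapRH, coe_eval₂RingHom, eval₂_monomial, ← Polynomial.C_pow,
      Polynomial.coeff_mul_C]
    simp only [Polynomial.coe_mapRingHom, Polynomial.coeff_map, Polynomial.coeff_monomial]
    rcases eq_or_ne n j with rfl | hne
    · simp [Polynomial.coeff_C_mul, Polynomial.coeff_X_pow]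
    · simp [Polynomial.coeff_C_mul, Polynomial.coeff_X_pow, hne, Ne.symm hne]

lemma swapRH_swapRH (P : Polynomial (Polynomial κ)) : swapRH κ (swapRH κ P) = P :=
  Polynomial.ext fun i => Polynomial.ext fun j => by rw [swapRH_coeff, swapRH_coeff]

lemma swapRH_injective : Function.Injective (swapRH κ) :=
  Function.LeftInverse.injective swapRH_swapRH

lemma swapRH_ne_zero {P : Polynomial (Polynomial κ)} (h : P ≠ 0) : swapRH κ P ≠ 0 :=
  fun h0 => h (by rw [← swapRH_swapRH P, h0, map_zero])

noncomputable def Wd (P : Polynomial (RatFunc κ)) : ℤ :=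
  if h : P.support.Nonempty then P.support.sup' h fun j => (P.coeff j).intDegree else 0

lemma Wd_eq {P : Polynomial (RatFunc κ)} (hP : P ≠ 0) :
    Wd P = P.support.sup' (Polynomial.support_nonempty.mpr hP)
      fun j => (P.coeff j).intDegree := by
  rw [Wd, dif_pos (Polynomial.support_nonempty.mpr hP)]

lemma Wd_le_iff {P : Polynomial (RatFunc κ)} (hP : P ≠ 0) {B : ℤ} :
    Wd P ≤ B ↔ ∀ j ∈ P.support, (P.coeff j).intDegree ≤ B := by
  rw [Wd_eq hP]
  exact Finset.sup'_le_iff _ _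

lemma le_Wd {P : Polynomial (RatFunc κ)} (hP : P ≠ 0) {j : ℕ} (hj : j ∈ P.support) :
    (P.coeff j).intDegree ≤ Wd P := by
  rw [Wd_eq hP]
  exact Finset.le_sup' (fun j => (P.coeff j).intDegree) hj

lemma Wd_exists {P : Polynomial (RatFunc κ)} (hP : P ≠ 0) :
    ∃ j ∈ P.support, (P.coeff j).intDegree = Wd P := by
  rw [Wd_eq hP]
  obtain ⟨b, hb, he⟩ := Finset.exists_mem_eq_sup'
    (Polynomial.support_nonempty.mpr hP) (fun j => (P.coeff j).intDegree)
  exact ⟨b, hb, he.symm⟩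

lemma Wd_C_mul {c : RatFunc κ} (hc : c ≠ 0) {P : Polynomial (RatFunc κ)} (hP : P ≠ 0) :
    Wd (Polynomial.C c * P) = c.intDegree + Wd P := by
  have hCP : Polynomial.C c * P ≠ 0 := mul_ne_zero (by simpa using hc) hP
  have hsupp : (Polynomial.C c * P).support = P.support := by
    ext j
    simp [Polynomial.mem_support_iff, Polynomial.coeff_C_mul, hc]
  refine le_antisymm ?_ ?_
  · rw [Wd_le_iff hCP]
    intro j hj
    rw [hsupp] at hj
    rw [Polynomial.coeff_C_mul,
      RatFunc.intDegree_mul hc (Polynomial.mem_support_iff.mp hj)]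
    linarith [le_Wd hP hj]
  · obtain ⟨j0, hj0, he⟩ := Wd_exists hP
    have : ((Polynomial.C c * P).coeff j0).intDegree = c.intDegree + Wd P := by
      rw [Polynomial.coeff_C_mul,
        RatFunc.intDegree_mul hc (Polynomial.mem_support_iff.mp hj0), he]
    rw [← this]
    exact le_Wd hCP (by rwa [hsupp])

lemma Wd_psi {P₀ : Polynomial (Polynomial κ)} (h : P₀ ≠ 0) :
    Wd (P₀.map (algebraMap (Polynomial κ) (RatFunc κ))) = ((swapRH κ P₀).natDegree : ℤ) := by
  have hinj : Function.Injective (algebraMap (Polynomial κ) (RatFunc κ)) :=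
    IsFractionRing.injective _ _
  have hmap : P₀.map (algebraMap (Polynomial κ) (RatFunc κ)) ≠ 0 := by
    intro h0
    exact h (Polynomial.map_injective _ hinj (by simpa using h0))
  refine le_antisymm ?_ ?_
  · rw [Wd_le_iff hmap]
    intro j hj
    rw [Polynomial.coeff_map, RatFunc.intDegree_polynomial]
    have hne : P₀.coeff j ≠ 0 := by
      intro h0
      rw [Polynomial.mem_support_iff, Polynomial.coeff_map, h0, map_zero] at hj
      exact hj rfl
    have hcoeff : ((swapRH κ P₀).coeff ((P₀.coeff j).natDegree)).coeff j ≠ 0 := by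
      rw [swapRH_coeff, Polynomial.coeff_natDegree]
      exact Polynomial.leadingCoeff_ne_zero.mpr hne
    have h1 : (swapRH κ P₀).coeff ((P₀.coeff j).natDegree) ≠ 0 := by
      intro h0; rw [h0] at hcoeff; simp at hcoeff
    exact_mod_cast Nat.cast_le.mpr (Polynomial.le_natDegree_of_ne_zero h1)
  · set I := (swapRH κ P₀).natDegree
    have hs : swapRH κ P₀ ≠ 0 := swapRH_ne_zero h
    have hlead : (swapRH κ P₀).coeff I ≠ 0 := by
      rw [show I = (swapRH κ P₀).natDegree from rfl, Polynomial.coeff_natDegree]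
      exact Polynomial.leadingCoeff_ne_zero.mpr hs
    obtain ⟨j, hj⟩ : ∃ j, ((swapRH κ P₀).coeff I).coeff j ≠ 0 := by
      by_contra hall
      push_neg at hall
      exact hlead (Polynomial.ext hall)
    rw [swapRH_coeff] at hj
    have hj0 : P₀.coeff j ≠ 0 := fun h0 => hj (by rw [h0]; simp)
    have hmem : j ∈ (P₀.map (algebraMap (Polynomial κ) (RatFunc κ))).support := by
      rw [Polynomial.mem_support_iff, Polynomial.coeff_map]
      intro h0
      exact hj0 (hinj (by simpa using h0))
    have hIle : (I : ℤ) ≤ ((P₀.coeff j).natDegree : ℤ) :=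
      Nat.cast_le.mpr (Polynomial.le_natDegree_of_ne_zero hj)
    refine le_trans hIle ?_
    have := le_Wd hmap hmem
    rwa [Polynomial.coeff_map, RatFunc.intDegree_polynomial] at this

lemma exists_clearing (P : Polynomial (RatFunc κ)) (hP : P ≠ 0) :
    ∃ (c : RatFunc κ) (P₀ : Polynomial (Polynomial κ)), c ≠ 0 ∧ P₀ ≠ 0 ∧
      Polynomial.C c * P = P₀.map (algebraMap (Polynomial κ) (RatFunc κ)) := by
  obtain ⟨b, hb⟩ := IsLocalization.integerNormalization_map_to_map
    (nonZeroDivisors (Polynomial κ)) P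
  set c := algebraMap (Polynomial κ) (RatFunc κ) (b : Polynomial κ) with hc
  have hbne : (b : Polynomial κ) ≠ 0 := nonZeroDivisors.coe_ne_zero b
  have hcne : c ≠ 0 := by
    rw [hc]
    exact fun h0 => hbne (IsFractionRing.injective (Polynomial κ) (RatFunc κ) (by simpa using h0))
  have hsmul : ((b : Polynomial κ) • P) = Polynomial.C c * P := by
    ext j
    simp [Polynomial.coeff_smul, Algebra.smul_def, Polynomial.coeff_C_mul, hc]
  refine ⟨c, _, hcne, ?_, by rw [hb, hsmul]⟩
  intro h0
  rw [h0] at hb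
  simp only [Polynomial.map_zero] at hb
  have : Polynomial.C c * P = 0 := by rw [← hsmul, ← hb]
  exact hP (by
    rcases mul_eq_zero.mp this with h | h
    · exact absurd h (by simpa using hcne)
    · exact h)

lemma Wd_mul {P Q : Polynomial (RatFunc κ)} (hP : P ≠ 0) (hQ : Q ≠ 0) :
    Wd (P * Q) = Wd P + Wd Q := by
  obtain ⟨cP, P₀, hcP, hP₀, heP⟩ := exists_clearing P hP
  obtain ⟨cQ, Q₀, hcQ, hQ₀, heQ⟩ := exists_clearing Q hQ
  have hPQ : P * Q ≠ 0 := mul_ne_zero hP hQ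
  have key : Wd (Polynomial.C cP * P * (Polynomial.C cQ * Q))
      = ((swapRH κ P₀).natDegree : ℤ) + ((swapRH κ Q₀).natDegree : ℤ) := by
    rw [heP, heQ, ← Polynomial.map_mul, Wd_psi (mul_ne_zero hP₀ hQ₀), map_mul,
      Polynomial.natDegree_mul (swapRH_ne_zero hP₀) (swapRH_ne_zero hQ₀)]
    push_cast
    ring
  have hlhs : Wd (Polynomial.C cP * P * (Polynomial.C cQ * Q))
      = cP.intDegree + cQ.intDegree + Wd (P * Q) := by
    have : Polynomial.C cP * P * (Polynomial.C cQ * Q)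
        = Polynomial.C cP * (Polynomial.C cQ * (P * Q)) := by ring
    rw [this, Wd_C_mul hcP (mul_ne_zero (by simpa using hcQ) hPQ), Wd_C_mul hcQ hPQ]
    ring
  have hrhs1 : ((swapRH κ P₀).natDegree : ℤ) = cP.intDegree + Wd P := by
    rw [← Wd_psi hP₀, ← heP, Wd_C_mul hcP hP]
  have hrhs2 : ((swapRH κ Q₀).natDegree : ℤ) = cQ.intDegree + Wd Q := by
    rw [← Wd_psi hQ₀, ← heQ, Wd_C_mul hcQ hQ]
  rw [hlhs, hrhs1, hrhs2] at key
  omega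

lemma Wd_one : Wd (1 : Polynomial (RatFunc κ)) = 0 := by
  rw [Wd_eq (one_ne_zero)]
  have hs : (1 : Polynomial (RatFunc κ)).support = {0} := by
    rw [← Polynomial.C_1, Polynomial.support_C (one_ne_zero)]
  rw [Finset.sup'_congr _ hs (fun j _ => rfl), Finset.sup'_singleton]
  simp [RatFunc.intDegree_one]

lemma Wd_pow {P : Polynomial (RatFunc κ)} (hP : P ≠ 0) (n : ℕ) :
    Wd (P ^ n) = n * Wd P := by
  induction n with
  | zero => simpa using Wd_one
  | succ n ih =>
    rw [pow_succ, Wd_mul (pow_ne_zero n hP) hP, ih]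
    push_cast
    ring

end Aux
end C4

section C5
open Polynomial Finset
namespace Aux

variable {κ : Type*} [Field κ]

def Ok (B : ℤ) (x : RatFunc κ) : Prop := x = 0 ∨ x.intDegree ≤ B

lemma Ok.mono {B B' : ℤ} (h : B ≤ B') {x : RatFunc κ} : Ok B x → Ok B' x := by
  rintro (rfl | hx)
  · exact Or.inl rfl
  · exact Or.inr (le_trans hx h)

lemma ok_zero {B : ℤ} : Ok B (0 : RatFunc κ) := Or.inl rfl

lemma Ok.add {B : ℤ} {x y : RatFunc κ} (hx : Ok B x) (hy : Ok B y) : Ok B (x + y) := by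
  rcases hx with rfl | hx
  · simpa using hy
  rcases hy with rfl | hy
  · rw [add_zero]; exact Or.inr hx
  by_cases hy0 : y = 0
  · subst hy0; rw [add_zero]; exact Or.inr hx
  by_cases hxy : x + y = 0
  · exact Or.inl hxy
  exact Or.inr (le_trans (RatFunc.intDegree_add_le hy0 hxy) (max_le hx hy))

lemma Ok.mul {B C : ℤ} {x y : RatFunc κ} (hx : Ok B x) (hy : Ok C y) : Ok (B + C) (x * y) := by
  rcases hx with rfl | hx
  · exact Or.inl (by simp)
  rcases hy with rfl | hy
  · exact Or.inl (by simp)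
  by_cases hx0 : x = 0
  · exact Or.inl (by simp [hx0])
  by_cases hy0 : y = 0
  · exact Or.inl (by simp [hy0])
  exact Or.inr (by rw [RatFunc.intDegree_mul hx0 hy0]; omega)

lemma Ok.sum {B : ℤ} {ι : Type*} (s : Finset ι) (f : ι → RatFunc κ)
    (h : ∀ i ∈ s, Ok B (f i)) : Ok B (∑ i ∈ s, f i) :=
  Finset.sum_induction f (Ok B) (fun _ _ ha hb => ha.add hb) ok_zero h

def OkP (B : ℤ) (P : Polynomial (RatFunc κ)) : Prop := ∀ j, Ok B (P.coeff j)

lemma OkP.mul {B C : ℤ} {P Q : Polynomial (RatFunc κ)} (hP : OkP B P) (hQ : OkP C Q) :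
    OkP (B + C) (P * Q) := by
  intro j
  rw [Polynomial.coeff_mul]
  exact Ok.sum _ _ fun ab _ => (hP ab.1).mul (hQ ab.2)

lemma okP_one : OkP 0 (1 : Polynomial (RatFunc κ)) := by
  intro j
  rcases eq_or_ne j 0 with rfl | hj
  · exact Or.inr (by simp [RatFunc.intDegree_one])
  · rw [Polynomial.coeff_one, if_neg hj]
    exact ok_zero

lemma OkP.pow {B : ℤ} {P : Polynomial (RatFunc κ)} (hP : OkP B P) (n : ℕ) :
    OkP ((n : ℤ) * B) (P ^ n) := by
  induction n with
  | zero => simpa using okP_one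
  | succ n ih =>
    rw [pow_succ]
    have := ih.mul hP
    have harith : ((n : ℤ) * B) + B = ((n + 1 : ℕ) : ℤ) * B := by push_cast; ring
    rw [harith] at this
    exact this

lemma OkP_of_Wd_le {B : ℤ} {P : Polynomial (RatFunc κ)} (hP : P ≠ 0) (h : Wd P ≤ B) :
    OkP B P := by
  intro j
  by_cases hj : P.coeff j = 0
  · exact Or.inl hj
  · exact Or.inr (le_trans (le_Wd hP (Polynomial.mem_support_iff.mpr hj)) h)

lemma Wd_le_of_OkP {B : ℤ} {P : Polynomial (RatFunc κ)} (hP : P ≠ 0) (h : OkP B P) :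
    Wd P ≤ B :=
  (Wd_le_iff hP).mpr fun j hj => (h j).resolve_left (Polynomial.mem_support_iff.mp hj)

lemma intDegree_add_eq {B : ℤ} {x y : RatFunc κ} (hx : x ≠ 0) (hB : x.intDegree = B)
    (hy : Ok (B - 1) y) : x + y ≠ 0 ∧ (x + y).intDegree = B := by
  by_cases hy0 : y = 0
  · subst hy0; simpa [hx] using hB
  have hyd : y.intDegree ≤ B - 1 := hy.resolve_left hy0
  have hxy : x + y ≠ 0 := by
    intro h0
    have hyx : y = -x := by linear_combination h0
    rw [hyx, RatFunc.intDegree_neg, hB] at hyd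
    omega
  refine ⟨hxy, le_antisymm ?_ ?_⟩
  · refine le_trans (RatFunc.intDegree_add_le hy0 hxy) ?_
    rw [hB]
    exact max_le le_rfl (by omega)
  · have hx' : (x + y) + -y = x := by ring
    have hny : -y ≠ 0 := neg_ne_zero.mpr hy0
    have := RatFunc.intDegree_add_le hny (by rw [hx']; exact hx)
    rw [hx', RatFunc.intDegree_neg, hB] at this
    rcases max_cases (x + y).intDegree y.intDegree with ⟨he, _⟩ | ⟨he, _⟩
    · omega
    · omega

lemma main_count {H G : Polynomial (RatFunc κ)} {k e : ℕ} (hk : 2 ≤ k) (he : 2 ≤ e)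
    (hmon : H.Monic) (hdeg : H.natDegree = k) (hsub : H.coeff (k - 1) = 0)
    (hG : polyIter H e = G)
    (hup : OkP 1 G) (hat : ∃ j, G.coeff j ≠ 0 ∧ (G.coeff j).intDegree = 1) : False := by
  have hH0 : H ≠ 0 := hmon.ne_zero
  have hexp : ∀ n, polyIter H (n + 1)
      = ∑ j ∈ Finset.range (k + 1), C (H.coeff j) * (polyIter H n) ^ j := by
    intro n
    show H.comp (polyIter H n) = _
    rw [comp_expand, hdeg]
  obtain ⟨j1, hj1ne, hj1d⟩ := hat
  by_cases hN : Wd H ≤ 0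
  · have hOk0 : ∀ n, OkP 0 (polyIter H n) := by
      intro n
      induction n with
      | zero =>
        intro j
        show Ok 0 ((X : Polynomial (RatFunc κ)).coeff j)
        rw [Polynomial.coeff_X]
        split_ifs
        · exact Or.inr (by simp [RatFunc.intDegree_one])
        · exact ok_zero
      | succ n ih =>
        rw [hexp n]
        intro i
        rw [finset_sum_coeff]
        refine Ok.sum _ _ fun j _ => ?_
        rw [Polynomial.coeff_C_mul]
        have h1 : Ok 0 (H.coeff j) := OkP_of_Wd_le hH0 hN j
        have h2 : Ok 0 ((polyIter H n ^ j).coeff i) := by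
          have := (OkP.pow ih j) i
          simpa using this
        simpa using h1.mul h2
    have := (hOk0 e) j1
    rw [hG] at this
    rcases this with h0 | hle
    · exact hj1ne h0
    · omega
  push_neg at hN
  set N := Wd H with hNdef
  have hOkN : OkP N H := OkP_of_Wd_le hH0 le_rfl
  have hiterM : ∀ n, (polyIter H n).Monic := fun n => monic_polyIter hmon (by omega) n
  have hiter0 : ∀ n, polyIter H n ≠ 0 := fun n => (hiterM n).ne_zero
  have main : ∀ n, 1 ≤ n → Wd (polyIter H n) = (k : ℤ) ^ (n - 1) * N := by
    intro n hn
    induction n with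
    | zero => omega
    | succ n ih =>
      rcases Nat.eq_zero_or_pos n with rfl | hn1
      · show Wd (H.comp (polyIter H 0)) = _
        show Wd (H.comp X) = _
        simp [Polynomial.comp_X, hNdef]
      · have hI := ih hn1
        set In := polyIter H n with hIn
        set Mn := (k : ℤ) ^ (n - 1) * N with hMn
        have hkn1 : (1 : ℤ) ≤ (k : ℤ) ^ (n - 1) := one_le_pow₀ (by exact_mod_cast by omega)
        have hNMn : N ≤ Mn := by nlinarith
        have hMn1 : 1 ≤ Mn := by nlinarith
        have hInOk : OkP Mn In := OkP_of_Wd_le (hiter0 n) (le_of_eq hI)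
        have hpowOk : OkP ((k : ℤ) * Mn) (In ^ k) := by
          have := hInOk.pow k
          simpa using this
        -- upper bound
        have hupper : OkP ((k : ℤ) * Mn) (polyIter H (n + 1)) := by
          rw [hexp n]
          intro i
          rw [finset_sum_coeff]
          refine Ok.sum _ _ fun j hj => ?_
          rw [Polynomial.coeff_C_mul]
          have hjk : j ≤ k := by have := Finset.mem_range.mp hj; omega
          rcases eq_or_ne j k with rfl | hjne
          · rw [show H.coeff j = 1 by rw [← hdeg]; exact hmon.coeff_natDegree]
            simpa using hpowOk i
          rcases eq_or_ne j (k - 1) with rfl | hjne2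
          · rw [hsub]
            simpa using (ok_zero : Ok ((k:ℤ)*Mn) (0 : RatFunc κ))
          · have hj2 : j ≤ k - 2 := by omega
            have h1 : Ok N (H.coeff j) := hOkN j
            have h2 : Ok ((j : ℤ) * Mn) ((In ^ j).coeff i) := (hInOk.pow j) i
            refine (h1.mul h2).mono ?_
            have hj2' : (j : ℤ) ≤ (k : ℤ) - 2 := by exact_mod_cast by omega
            nlinarith
        -- lower bound
        have hpowWd : Wd (In ^ k) = (k : ℤ) * Mn := by
          rw [Wd_pow (hiter0 n) k, hI]
        obtain ⟨i0, hi0mem, hi0⟩ := Wd_exists (pow_ne_zero k (hiter0 n))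
        rw [hpowWd] at hi0
        have hi0ne : (In ^ k).coeff i0 ≠ 0 := Polynomial.mem_support_iff.mp hi0mem
        have hcoeff_split : (polyIter H (n+1)).coeff i0
            = (∑ j ∈ Finset.range k, C (H.coeff j) * In ^ j).coeff i0 + (In ^ k).coeff i0 := by
          rw [hexp n, Finset.sum_range_succ,
            show H.coeff k = 1 by rw [← hdeg]; exact hmon.coeff_natDegree]
          simp [Polynomial.coeff_add, hIn]
        have htail : Ok ((k : ℤ) * Mn - 1)
            ((∑ j ∈ Finset.range k, C (H.coeff j) * In ^ j).coeff i0) := by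
          rw [finset_sum_coeff]
          refine Ok.sum _ _ fun j hj => ?_
          rw [Polynomial.coeff_C_mul]
          have hjk : j < k := Finset.mem_range.mp hj
          rcases eq_or_ne j (k - 1) with rfl | hjne2
          · rw [hsub]
            simpa using (ok_zero : Ok ((k:ℤ)*Mn - 1) (0 : RatFunc κ))
          · have hj2 : j ≤ k - 2 := by omega
            have h1 : Ok N (H.coeff j) := hOkN j
            have h2 : Ok ((j : ℤ) * Mn) ((In ^ j).coeff i0) := (hInOk.pow j) i0
            refine (h1.mul h2).mono ?_
            have hj2' : (j : ℤ) ≤ (k : ℤ) - 2 := by exact_mod_cast by omega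
            nlinarith
        have hmain := intDegree_add_eq hi0ne hi0 htail
        obtain ⟨hne0', hdeq'⟩ := hmain
        have hne0 : (polyIter H (n+1)).coeff i0 ≠ 0 := by
          rw [hcoeff_split, add_comm ((∑ j ∈ Finset.range k, C (H.coeff j) * In ^ j).coeff i0)
            ((In ^ k).coeff i0)]
          exact hne0'
        have hdeq : ((polyIter H (n+1)).coeff i0).intDegree = (k:ℤ) * Mn := by
          rw [hcoeff_split, add_comm ((∑ j ∈ Finset.range k, C (H.coeff j) * In ^ j).coeff i0)
            ((In ^ k).coeff i0)]
          exact hdeq'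
        have hlow : (k : ℤ) * Mn ≤ Wd (polyIter H (n + 1)) := by
          rw [← hdeq]
          exact le_Wd (fun h0 => hne0 (by rw [h0]; simp)) (Polynomial.mem_support_iff.mpr hne0)
        have hupW : Wd (polyIter H (n + 1)) ≤ (k : ℤ) * Mn :=
          Wd_le_of_OkP (hiter0 (n+1)) hupper
        have : Wd (polyIter H (n + 1)) = (k : ℤ) * Mn := le_antisymm hupW hlow
        rw [this, hMn]
        have hn1' : n - 1 + 1 = n := by omega
        have : (k : ℤ) * ((k:ℤ) ^ (n-1) * N) = (k:ℤ) ^ (n - 1 + 1) * N := by ring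
        rw [this, hn1']
        simp
  have hWdG : Wd G = (k : ℤ) ^ (e - 1) * N := by rw [← hG]; exact main e (by omega)
  have hG0 : G ≠ 0 := by rw [← hG]; exact hiter0 e
  have hle1 : Wd G ≤ 1 := Wd_le_of_OkP hG0 hup
  have hke : (k : ℤ) ≤ (k : ℤ) ^ (e - 1) := by
    calc (k : ℤ) = (k : ℤ) ^ 1 := (pow_one _).symm
      _ ≤ (k : ℤ) ^ (e - 1) := pow_le_pow_right₀ (by exact_mod_cast by omega) (by omega)
  have : (2 : ℤ) ≤ Wd G := by
    rw [hWdG]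
    nlinarith [hN]
  omega

end Aux
end C5

section C6
open Polynomial
namespace Aux

lemma mem_range_of_fixed {F K : Type*} [Field F] [Field K] [Algebra F K] [IsAlgClosed K]
    [Algebra.IsAlgebraic F K] [CharZero F] (x : K)
    (hx : ∀ σ : K ≃ₐ[F] K, σ x = x) : ∃ r : F, algebraMap F K r = x := by
  classical
  have hint : IsIntegral F x := (Algebra.IsAlgebraic.isAlgebraic x).isIntegral
  set p := minpoly F x with hp
  have hirr := minpoly.irreducible hint
  have hsep : p.Separable := hirr.separable
  have hsplits : (p.map (algebraMap F K)).Splits := IsAlgClosed.splits _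
  have hroots : ∀ y : K, Polynomial.aeval y p = 0 → y = x := by
    intro y hy
    obtain ⟨φ, hφ⟩ := IntermediateField.exists_algHom_of_splits_of_aeval
      (fun s => ⟨(Algebra.IsAlgebraic.isAlgebraic s).isIntegral,
        IsAlgClosed.splits _⟩) hy
    have hbij := Algebra.IsAlgebraic.algHom_bijective φ
    have : (AlgEquiv.ofBijective φ hbij) x = y := hφ
    rw [← this, hx (AlgEquiv.ofBijective φ hbij)]
  have hp0 : p ≠ 0 := minpoly.ne_zero hint
  have hcard : p.natDegree = (p.map (algebraMap F K)).roots.card :=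
    by rw [← Polynomial.natDegree_map (algebraMap F K)]; exact hsplits.natDegree_eq_card_roots
  have hnodup : (p.map (algebraMap F K)).roots.Nodup := nodup_roots (hsep.map)
  have hdeg1 : p.natDegree = 1 := by
    by_contra hne
    have hge2 : 2 ≤ p.natDegree := by
      have h1 : 0 < p.natDegree := minpoly.natDegree_pos hint
      omega
    have hall : ∀ y ∈ (p.map (algebraMap F K)).roots, x = y := by
      intro y hy
      have hmem := Polynomial.mem_roots'.mp hy
      have : Polynomial.aeval y p = 0 := by
        have := hmem.2
        rwa [Polynomial.IsRoot, Polynomial.eval_map, ← Polynomial.aeval_def] at this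
      exact (hroots y this).symm
    have hcount : Multiset.count x (p.map (algebraMap F K)).roots
        = Multiset.card (p.map (algebraMap F K)).roots := Multiset.count_eq_card.mpr hall
    have hle1 : Multiset.count x (p.map (algebraMap F K)).roots ≤ 1 :=
      (Multiset.nodup_iff_count_le_one.mp hnodup) x
    omega
  have : p.degree = 1 := (Polynomial.degree_eq_iff_natDegree_eq hp0).mpr hdeg1
  obtain ⟨r, hr⟩ := (minpoly.degree_eq_one_iff).mp this
  exact ⟨r, hr⟩

end Aux
end C6

section Final
open Polynomial Finset
theorem stmt3 (d m : ℕ) (hm : 1 < m) (hd : m < d) (α β : ℕ → ℂ) (hα : α 2 ≠ 0)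
    (g : Polynomial (AlgebraicClosure (RatFunc ℂ)))
    (hg : g = X ^ d + C tK * X ^ (m - 1) +
      ∑ i ∈ Finset.Icc 2 m, C (cK (α i) * tK + cK (β i)) * X ^ (m - i)) :
    ¬ ∃ (h : Polynomial (AlgebraicClosure (RatFunc ℂ))) (e : ℕ),
      2 ≤ h.natDegree ∧ 1 < e ∧ polyIter h e = g := by
  classical
  haveI hCF : CharZero (RatFunc ℂ) := charZero_of_injective_algebraMap
    (algebraMap ℂ (RatFunc ℂ)).injective
  haveI hCK : CharZero (AlgebraicClosure (RatFunc ℂ)) := charZero_of_injective_algebraMap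
    (algebraMap (RatFunc ℂ) (AlgebraicClosure (RatFunc ℂ))).injective
  set φ : RatFunc ℂ →+* AlgebraicClosure (RatFunc ℂ)
    := algebraMap (RatFunc ℂ) (AlgebraicClosure (RatFunc ℂ)) with hφdef
  have hφinj : Function.Injective φ := φ.injective
  rintro ⟨h, e, hk2, he1, hiter⟩
  set k := h.natDegree with hkdef
  -- coefficients of g
  have gc : ∀ n, g.coeff n = (if n = d then 1 else 0) + (if n = m - 1 then tK else 0)
      + ∑ i ∈ Finset.Icc 2 m, (if n = m - i then (cK (α i) * tK + cK (β i)) else 0) := by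
    intro n
    rw [hg]
    simp only [Polynomial.coeff_add, Polynomial.coeff_C_mul, Polynomial.coeff_X_pow,
      Polynomial.finset_sum_coeff, mul_ite, mul_one, mul_zero]
  have hgd : g.coeff d = 1 := by
    rw [gc, if_pos rfl, if_neg (by omega),
      Finset.sum_eq_zero (fun i hi => by
        rw [if_neg]; have := Finset.mem_Icc.mp hi; omega)]
    ring
  have hgd1 : g.coeff (d - 1) = 0 := by
    rw [gc, if_neg (by omega), if_neg (by omega),
      Finset.sum_eq_zero (fun i hi => by
        rw [if_neg]; have := Finset.mem_Icc.mp hi; omega)]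
    ring
  have hgm1 : g.coeff (m - 1) = tK := by
    rw [gc, if_neg (by omega), if_pos rfl,
      Finset.sum_eq_zero (fun i hi => by
        rw [if_neg]; have := Finset.mem_Icc.mp hi; omega)]
    ring
  -- natDegree of g
  have hgne : g ≠ 0 := fun h0 => by
    rw [h0, Polynomial.coeff_zero] at hgd; exact one_ne_zero hgd.symm
  have hdegle : g.degree ≤ (d : ℕ) := by
    refine (Polynomial.degree_le_iff_coeff_zero _ _).mpr fun N hN => ?_
    have hNd : d < N := by exact_mod_cast hN
    rw [gc, if_neg (by omega), if_neg (by omega),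
      Finset.sum_eq_zero (fun i hi => by
        rw [if_neg]; have := Finset.mem_Icc.mp hi; omega)]
    ring
  have hdeg_g : g.natDegree = d := by
    refine le_antisymm (Polynomial.natDegree_le_iff_degree_le.mpr hdegle) ?_
    exact Polynomial.le_natDegree_of_ne_zero (by rw [hgd]; exact one_ne_zero)
  -- degrees
  have hd_eq : k ^ e = d := by
    rw [← hdeg_g, ← hiter, Aux.natDegree_polyIter]
  have he2 : 2 ≤ e := he1
  have hh0 : h ≠ 0 := fun h0 => by
    rw [hkdef, h0, Polynomial.natDegree_zero] at hk2; omega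
  -- gamma
  obtain ⟨γ, hγ⟩ := IsAlgClosed.exists_pow_nat_eq h.leadingCoeff
    (n := k - 1) (by omega)
  have hlead0 : h.leadingCoeff ≠ 0 := Polynomial.leadingCoeff_ne_zero.mpr hh0
  have hγ0 : γ ≠ 0 := by
    intro h0
    rw [h0, zero_pow (by omega : k - 1 ≠ 0)] at hγ
    exact hlead0 hγ.symm
  set H := C γ * h.comp (C γ⁻¹ * X) with hH
  have hHcoeff : ∀ n, H.coeff n = γ * (h.coeff n * γ⁻¹ ^ n) := by
    intro n
    rw [hH, Polynomial.coeff_C_mul, Aux.coeff_comp_C_mul_X]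
  have hHdeg : H.natDegree = k := by
    rw [hH, Polynomial.natDegree_C_mul hγ0, Polynomial.natDegree_comp,
      Polynomial.natDegree_C_mul_X _ (inv_ne_zero hγ0), mul_one]
  have hγk : γ * (γ ^ (k - 1) * γ⁻¹ ^ k) = 1 := by
    have hks : k - 1 + 1 = k := by omega
    rw [inv_pow, ← mul_assoc, ← pow_succ', hks, mul_inv_cancel₀ (pow_ne_zero _ hγ0)]
  have hHmonic : H.Monic := by
    have hc : H.coeff k = 1 := by
      rw [hHcoeff k, show h.coeff k = h.leadingCoeff from rfl, ← hγ]
      exact hγk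
    show H.leadingCoeff = 1
    rw [Polynomial.leadingCoeff, hHdeg, hc]
  -- conjugation of iterates
  have hconj : ∀ n, polyIter H n = C γ * (polyIter h n).comp (C γ⁻¹ * X) := by
    intro n
    induction n with
    | zero =>
      show X = C γ * (X.comp (C γ⁻¹ * X))
      rw [Polynomial.X_comp, ← mul_assoc, ← Polynomial.C_mul, mul_inv_cancel₀ hγ0,
        Polynomial.C_1, one_mul]
    | succ n ih =>
      show H.comp (polyIter H n) = C γ * (h.comp (polyIter h n)).comp (C γ⁻¹ * X)
      rw [ih, hH, Polynomial.mul_comp, Polynomial.C_comp, Polynomial.comp_assoc]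
      congr 1
      rw [Polynomial.mul_comp, Polynomial.C_comp, Polynomial.X_comp, ← mul_assoc,
        ← Polynomial.C_mul, inv_mul_cancel₀ hγ0, Polynomial.C_1, one_mul,
        Polynomial.comp_assoc]
  have hGconj : polyIter H e = C γ * g.comp (C γ⁻¹ * X) := by
    rw [hconj e, hiter]
  have hGmonic : (polyIter H e).Monic := Aux.monic_polyIter hHmonic (by omega) e
  have hGdeg : (polyIter H e).natDegree = d := by
    rw [Aux.natDegree_polyIter, hHdeg, hd_eq]
  have hGcoeff : ∀ n, (polyIter H e).coeff n = γ * (g.coeff n * γ⁻¹ ^ n) := by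
    intro n
    rw [hGconj, Polynomial.coeff_C_mul, Aux.coeff_comp_C_mul_X]
  -- gamma is a root of unity
  have hγd : γ ^ (d - 1) = 1 := by
    have h1 : (polyIter H e).coeff d = 1 := by
      rw [← hGdeg]; exact hGmonic.coeff_natDegree
    rw [hGcoeff d, hgd, one_mul] at h1
    have h2 : γ = γ ^ d := by
      rw [inv_pow] at h1
      field_simp at h1
      exact h1
    have h3 : γ ^ (d - 1) * γ = 1 * γ := by
      rw [one_mul, ← pow_succ, show d - 1 + 1 = d by omega, ← h2]
    exact mul_right_cancel₀ hγ0 h3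
  -- subleading coefficient of H vanishes
  have hHsub : H.coeff (k - 1) = 0 := by
    have hnextG : (polyIter H e).nextCoeff = 0 := by
      rw [Polynomial.nextCoeff_of_natDegree_pos (by rw [hGdeg]; omega), hGdeg,
        hGcoeff (d - 1), hgd1]
      ring
    have hnext := Aux.nextCoeff_polyIter hHmonic (by omega) (e - 1)
    rw [show e - 1 + 1 = e by omega, hHdeg, hnextG] at hnext
    have hkK : ((k : AlgebraicClosure (RatFunc ℂ))) ^ (e - 1) ≠ 0 := pow_ne_zero _ (Nat.cast_ne_zero.mpr (by omega))
    have h0 : H.nextCoeff = 0 := by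
      rcases mul_eq_zero.mp hnext.symm with h' | h'
      · exact absurd h' hkK
      · exact h'
    rwa [Polynomial.nextCoeff_of_natDegree_pos (by rw [hHdeg]; omega), hHdeg] at h0
  -- gamma comes from ℂ
  obtain ⟨ζ, hζ⟩ : ∃ ζ : ℂ, cK ζ = γ := by
    set q : Polynomial ℂ := X ^ (d - 1) - C 1 with hq
    have hqsplits : q.Splits := IsAlgClosed.splits q
    have hqmone : (q.map cK).Monic := by
      have : q.Monic := Polynomial.monic_X_pow_sub_C 1 (by omega : d - 1 ≠ 0)
      exact this.map cK
    have hγroot : γ ∈ (q.map cK).roots := by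
      rw [Polynomial.mem_roots hqmone.ne_zero]
      show (q.map cK).eval γ = 0
      rw [hq]
      simp [Polynomial.eval_map, Polynomial.eval₂_sub, hγd]
    rw [hqsplits.roots_map_of_injective cK.injective] at hγroot
    obtain ⟨ζ, _, hζ⟩ := Multiset.mem_map.mp hγroot
    exact ⟨ζ, hζ⟩
  set rζ : RatFunc ℂ := algebraMap ℂ (RatFunc ℂ) ζ with hrζ
  have hφrζ : φ rζ = γ := hζ
  have hrζ0 : rζ ≠ 0 := by
    intro h0
    rw [← hφrζ, h0, map_zero] at hγ0
    exact hγ0 rfl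
  -- sigma-invariance
  have htKfix : ∀ σ : (AlgebraicClosure (RatFunc ℂ)) ≃ₐ[RatFunc ℂ] (AlgebraicClosure (RatFunc ℂ)), σ tK = tK := fun σ => σ.commutes RatFunc.X
  have hcKfix : ∀ (σ : (AlgebraicClosure (RatFunc ℂ)) ≃ₐ[RatFunc ℂ] (AlgebraicClosure (RatFunc ℂ))) (a : ℂ), σ (cK a) = cK a := fun σ a =>
    σ.commutes (algebraMap ℂ (RatFunc ℂ) a)
  have hgfix : ∀ (σ : (AlgebraicClosure (RatFunc ℂ)) ≃ₐ[RatFunc ℂ] (AlgebraicClosure (RatFunc ℂ))) (n : ℕ), σ (g.coeff n) = g.coeff n := by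
    intro σ n
    rw [gc n]
    rw [map_add, map_add, map_sum]
    congr 1
    · congr 1
      · split_ifs <;> simp
      · split_ifs with h'
        · exact htKfix σ
        · simp
    · refine Finset.sum_congr rfl fun i _ => ?_
      split_ifs with h'
      · rw [map_add, map_mul, hcKfix, htKfix, hcKfix]
      · simp
  have hγfix : ∀ σ : (AlgebraicClosure (RatFunc ℂ)) ≃ₐ[RatFunc ℂ] (AlgebraicClosure (RatFunc ℂ)), σ γ = γ := by
    intro σ
    rw [← hφrζ]
    exact σ.commutes rζ
  have hfixH : ∀ (σ : (AlgebraicClosure (RatFunc ℂ)) ≃ₐ[RatFunc ℂ] (AlgebraicClosure (RatFunc ℂ))) (n : ℕ), σ (H.coeff n) = H.coeff n := by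
    intro σ n
    set Hσ := H.map (σ : AlgebraicClosure (RatFunc ℂ) →+* AlgebraicClosure (RatFunc ℂ)) with hHσ
    have hσinj : Function.Injective (σ : AlgebraicClosure (RatFunc ℂ) →+* AlgebraicClosure (RatFunc ℂ)) := σ.injective
    have hσmonic : Hσ.Monic := hHmonic.map _
    have hσdeg : Hσ.natDegree = k := by
      rw [hHσ, Polynomial.natDegree_map_eq_of_injective hσinj, hHdeg]
    have hσsub : Hσ.coeff (k - 1) = 0 := by
      rw [hHσ, Polynomial.coeff_map, hHsub, map_zero]
    have hσiter : polyIter Hσ e = polyIter H e := by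
      rw [hHσ, ← Aux.map_polyIter]
      refine Polynomial.ext fun n => ?_
      rw [Polynomial.coeff_map, hGcoeff n]
      rw [map_mul, map_mul, map_pow, map_inv₀]
      have e1 : (σ : AlgebraicClosure (RatFunc ℂ) →+* AlgebraicClosure (RatFunc ℂ)) γ = γ :=
        hγfix σ
      have e2 : (σ : AlgebraicClosure (RatFunc ℂ) →+* AlgebraicClosure (RatFunc ℂ))
          (g.coeff n) = g.coeff n := hgfix σ n
      rw [e1, e2]
    have hdiff : (Hσ - H).natDegree ≤ k - 2 := by
      refine Polynomial.natDegree_le_iff_coeff_eq_zero.mpr fun N hN => ?_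
      rw [Polynomial.coeff_sub]
      by_cases h1 : N = k - 1
      · rw [h1, hσsub, hHsub, sub_zero]
      by_cases h2 : N = k
      · rw [h2, show Hσ.coeff k = 1 by rw [← hσdeg]; exact hσmonic.coeff_natDegree,
          show H.coeff k = 1 by rw [← hHdeg]; exact hHmonic.coeff_natDegree, sub_self]
      · have hNk : k < N := by omega
        rw [Polynomial.coeff_eq_zero_of_natDegree_lt (by omega : Hσ.natDegree < N),
          Polynomial.coeff_eq_zero_of_natDegree_lt (by omega : H.natDegree < N), sub_zero]
    have hHσH : Hσ = H :=
      Aux.polyIter_inj hk2 hσmonic hHmonic hσdeg hHdeg hdiff (by omega : 1 ≤ e) hσiter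
    have := congrArg (fun p => Polynomial.coeff p n) hHσH
    simpa [hHσ, Polynomial.coeff_map] using this
  -- descend H to F
  have hrange : ∀ n, ∃ r : RatFunc ℂ, φ r = H.coeff n := by
    intro n
    exact Aux.mem_range_of_fixed (F := RatFunc ℂ) (K := AlgebraicClosure (RatFunc ℂ)) (H.coeff n) fun σ => hfixH σ n
  set H' : Polynomial (RatFunc ℂ) := ∑ j ∈ Finset.range (k + 1),
    C (Classical.choose (hrange j)) * X ^ j with hH'
  have hH'map : H'.map φ = H := by
    refine Polynomial.ext fun n => ?_
    rw [hH', ← Polynomial.coe_mapRingHom, map_sum]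
    simp only [map_mul, Polynomial.coe_mapRingHom, Polynomial.map_C, Polynomial.map_pow,
      Polynomial.map_X]
    rw [Polynomial.finset_sum_coeff]
    have hterm : ∀ j ∈ Finset.range (k + 1),
        (C (φ (Classical.choose (hrange j))) * X ^ j).coeff n
          = if n = j then H.coeff j else 0 := by
      intro j _
      rw [Polynomial.coeff_C_mul, Polynomial.coeff_X_pow, Classical.choose_spec (hrange j)]
      split_ifs <;> simp
    rw [Finset.sum_congr rfl hterm, Finset.sum_ite_eq (Finset.range (k + 1)) n
      (fun j => H.coeff j)]
    split_ifs with hmem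
    · rfl
    · rw [Finset.mem_range, not_lt] at hmem
      exact (Polynomial.coeff_eq_zero_of_natDegree_lt (by omega : H.natDegree < n)).symm
  have hH'deg : H'.natDegree = k := by
    have := Polynomial.natDegree_map_eq_of_injective hφinj H'
    rw [hH'map] at this
    rw [← this, hHdeg]
  have hH'monic : H'.Monic := by
    have h1 : φ (H'.coeff k) = 1 := by
      rw [← Polynomial.coeff_map, hH'map, ← hHdeg]
      exact hHmonic.coeff_natDegree
    have := hφinj (by rw [h1, map_one] : φ (H'.coeff k) = φ 1)
    show H'.leadingCoeff = 1
    rw [Polynomial.leadingCoeff, hH'deg, this]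
  have hH'sub : H'.coeff (k - 1) = 0 := by
    have h1 : φ (H'.coeff (k - 1)) = 0 := by
      rw [← Polynomial.coeff_map, hH'map, hHsub]
    exact hφinj (by rw [h1, map_zero] : φ (H'.coeff (k - 1)) = φ 0)
  -- define g₀ and G₀ over F
  set g₀ : Polynomial (RatFunc ℂ) := X ^ d + C (RatFunc.X) * X ^ (m - 1) +
      ∑ i ∈ Finset.Icc 2 m,
        C (algebraMap ℂ (RatFunc ℂ) (α i) * RatFunc.X + algebraMap ℂ (RatFunc ℂ) (β i)) * X ^ (m - i) with hg₀
  have hg₀map : g₀.map φ = g := by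
    rw [hg₀, hg]
    rw [Polynomial.map_add, Polynomial.map_add, Polynomial.map_pow, Polynomial.map_X,
      Polynomial.map_mul, Polynomial.map_C, Polynomial.map_pow, Polynomial.map_X,
      ← Polynomial.coe_mapRingHom, map_sum]
    congr 1
    refine Finset.sum_congr rfl fun i _ => ?_
    rw [Polynomial.coe_mapRingHom, Polynomial.map_mul, Polynomial.map_C,
      Polynomial.map_pow, Polynomial.map_X, map_add, map_mul]
    rfl
  set G₀ : Polynomial (RatFunc ℂ) := C rζ * g₀.comp (C rζ⁻¹ * X) with hG₀
  have hG₀map : G₀.map φ = polyIter H e := by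
    rw [hGconj, hG₀, Polynomial.map_mul, Polynomial.map_C, Polynomial.map_comp,
      Polynomial.map_mul, Polynomial.map_C, Polynomial.map_X, hg₀map, hφrζ, map_inv₀, hφrζ]
  have hiterH' : polyIter H' e = G₀ := by
    apply Polynomial.map_injective φ hφinj
    rw [Aux.map_polyIter, hH'map, hG₀map]
  -- coefficients of G₀
  have g₀c : ∀ n, g₀.coeff n = (if n = d then 1 else 0) + (if n = m - 1 then RatFunc.X else 0)
      + ∑ i ∈ Finset.Icc 2 m, (if n = m - i then
          (algebraMap ℂ (RatFunc ℂ) (α i) * RatFunc.X + algebraMap ℂ (RatFunc ℂ) (β i)) else 0) := by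
    intro n
    rw [hg₀]
    simp only [Polynomial.coeff_add, Polynomial.coeff_C_mul, Polynomial.coeff_X_pow,
      Polynomial.finset_sum_coeff, mul_ite, mul_one, mul_zero]
  have hG₀coeff : ∀ n, G₀.coeff n = rζ * (g₀.coeff n * rζ⁻¹ ^ n) := by
    intro n
    show (C rζ * g₀.comp (C rζ⁻¹ * X)).coeff n = _
    rw [Polynomial.coeff_C_mul, Aux.coeff_comp_C_mul_X]
  have hintC : ∀ a : ℂ, (algebraMap ℂ (RatFunc ℂ) a).intDegree = 0 := by
    intro a
    rw [RatFunc.algebraMap_eq_C]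
    exact RatFunc.intDegree_C a
  have hrζinv : ∀ n : ℕ, (rζ⁻¹ ^ n).intDegree = 0 := by
    intro n
    rw [hrζ, ← map_inv₀, ← map_pow]
    exact hintC _
  have hOkg₀ : ∀ n, Aux.Ok 1 (g₀.coeff n) := by
    intro n
    rw [g₀c n]
    refine Aux.Ok.add (Aux.Ok.add ?_ ?_) (Aux.Ok.sum _ _ fun i _ => ?_)
    · split_ifs
      · exact Or.inr (by rw [RatFunc.intDegree_one]; omega)
      · exact Aux.ok_zero
    · split_ifs
      · exact Or.inr (by rw [RatFunc.intDegree_X])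
      · exact Aux.ok_zero
    · split_ifs
      · have heq : algebraMap ℂ (RatFunc ℂ) (α i) * RatFunc.X + algebraMap ℂ (RatFunc ℂ) (β i)
            = algebraMap (Polynomial ℂ) (RatFunc ℂ)
              (Polynomial.C (α i) * Polynomial.X + Polynomial.C (β i)) := by
          simp [RatFunc.algebraMap_C, RatFunc.algebraMap_X, RatFunc.algebraMap_eq_C]
        rw [heq]
        refine Or.inr ?_
        rw [RatFunc.intDegree_polynomial]
        exact_mod_cast Polynomial.natDegree_linear_le
      · exact Aux.ok_zero
  have hOkrζ : Aux.Ok 0 rζ := Or.inr (by rw [hrζ, hintC])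
  have hOkrζinv : ∀ n : ℕ, Aux.Ok 0 (rζ⁻¹ ^ n) := fun n => Or.inr (by rw [hrζinv])
  have hOkG₀ : Aux.OkP 1 G₀ := by
    intro n
    rw [hG₀coeff n]
    have := hOkrζ.mul ((hOkg₀ n).mul (hOkrζinv n))
    simpa using this
  have hatG₀ : ∃ j, G₀.coeff j ≠ 0 ∧ (G₀.coeff j).intDegree = 1 := by
    refine ⟨m - 1, ?_, ?_⟩
    · rw [hG₀coeff, g₀c, if_neg (by omega), if_pos rfl,
        Finset.sum_eq_zero (fun i hi => by
          rw [if_neg]; have := Finset.mem_Icc.mp hi; omega)]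
      rw [add_zero, zero_add]
      exact mul_ne_zero hrζ0 (mul_ne_zero RatFunc.X_ne_zero
        (pow_ne_zero _ (inv_ne_zero hrζ0)))
    · rw [hG₀coeff, g₀c, if_neg (by omega), if_pos rfl,
        Finset.sum_eq_zero (fun i hi => by
          rw [if_neg]; have := Finset.mem_Icc.mp hi; omega)]
      rw [add_zero, zero_add]
      rw [RatFunc.intDegree_mul hrζ0 (mul_ne_zero RatFunc.X_ne_zero
        (pow_ne_zero _ (inv_ne_zero hrζ0))),
        RatFunc.intDegree_mul RatFunc.X_ne_zero (pow_ne_zero _ (inv_ne_zero hrζ0)),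
        RatFunc.intDegree_X, hrζinv, hrζ, hintC]
      ring
  exact Aux.main_count hk2 he2 hH'monic hH'deg hH'sub hiterH' hOkG₀ hatG₀


end Final
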